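/- Let H_A, H_B, H_C be finite-dimensional complex inner product spaces and Y ⊆ H_A ⊗ H_B a subspace. Let ρ_A = tr_B(P_Y), let ε > 0, let P_− be the spectral projection of ρ_A onto the eigenvalues lying in [0, ε), and let P_V be any orthogonal projection on H_A of rank V. Then for every unit vector y in the subspace Y ⊗ H_C of (H_A ⊗ H_B) ⊗ H_C, one has ‖(P_V P_− ⊗ id_{B} ⊗ id_C) y‖² ≤ ε·V. -/

import Mathlib

set_option linter.unusedSectionVars false
set_option maxHeartbeats 1000000

noncomputable section

/-- Concrete model of the Hilbert tensor product: the tensor `a ⊗ b`. -/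
def tmul {ι κ : Type*} [Fintype ι] [Fintype κ]
    (a : EuclideanSpace ℂ ι) (b : EuclideanSpace ℂ κ) : EuclideanSpace ℂ (ι × κ) :=
  WithLp.toLp 2 (fun p => a p.1 * b p.2)

/-- The subspace `V ⊗ H₂`: the span of the simple tensors `v ⊗ b` with `v ∈ V`. -/
def extSub {ι κ : Type*} [Fintype ι] [Fintype κ]
    (V : Submodule ℂ (EuclideanSpace ℂ ι)) : Submodule ℂ (EuclideanSpace ℂ (ι × κ)) :=
  Submodule.span ℂ {x | ∃ v ∈ V, ∃ b : EuclideanSpace ℂ κ, x = tmul v b}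

/-- The operator `X ⊗ Y` on the concrete tensor product. -/
def kron {ι κ : Type*} [Fintype ι] [Fintype κ] [DecidableEq ι] [DecidableEq κ]
    (X : EuclideanSpace ℂ ι →ₗ[ℂ] EuclideanSpace ℂ ι)
    (Y : EuclideanSpace ℂ κ →ₗ[ℂ] EuclideanSpace ℂ κ) :
    EuclideanSpace ℂ (ι × κ) →ₗ[ℂ] EuclideanSpace ℂ (ι × κ) :=
  Matrix.toEuclideanLin
    (Matrix.kroneckerMap (· * ·) (Matrix.toEuclideanLin.symm X) (Matrix.toEuclideanLin.symm Y))

/-- The orthogonal projection onto a subspace, as an operator on the ambient space. -/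
def projOf {E : Type*} [NormedAddCommGroup E] [InnerProductSpace ℂ E] [FiniteDimensional ℂ E]
    (S : Submodule ℂ E) : E →L[ℂ] E :=
  S.subtypeL.comp (S.orthogonalProjection)

/-- The span of the eigenvectors of `ρ` whose eigenvalue is a real number in the set `I`. -/
def specSub {E : Type*} [NormedAddCommGroup E] [InnerProductSpace ℂ E] [FiniteDimensional ℂ E]
    (ρ : E →ₗ[ℂ] E) (I : Set ℝ) : Submodule ℂ E :=
  ⨆ c : I, Module.End.eigenspace ρ ((c : ℝ) : ℂ)

open scoped InnerProductSpace ComplexConjugate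

/-! ### Generic helpers -/

section Generic
variable {E : Type*} [NormedAddCommGroup E] [InnerProductSpace ℂ E] [FiniteDimensional ℂ E]

lemma trace_onb {n : Type*} [Fintype n] [DecidableEq n] (b : OrthonormalBasis n ℂ E)
    (T : E →ₗ[ℂ] E) : LinearMap.trace ℂ E T = ∑ i, ⟪b i, T (b i)⟫_ℂ := by
  rw [LinearMap.trace_eq_matrix_trace ℂ b.toBasis, Matrix.trace]
  congr 1; ext i
  rw [Matrix.diag_apply, LinearMap.toMatrix_apply, OrthonormalBasis.coe_toBasis,
    OrthonormalBasis.coe_toBasis_repr_apply, OrthonormalBasis.repr_apply_apply]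

lemma projOf_apply_mem (S : Submodule ℂ E) (x : E) : projOf S x ∈ S := by
  simp [projOf]

lemma projOf_eq_self (S : Submodule ℂ E) {x : E} (hx : x ∈ S) : projOf S x = x := by
  simp only [projOf, ContinuousLinearMap.comp_apply, Submodule.subtypeL_apply]
  exact congrArg _ (Submodule.orthogonalProjection_mem_subspace_eq_self (⟨x, hx⟩ : S))

lemma projOf_symm (S : Submodule ℂ E) (x y : E) : ⟪projOf S x, y⟫_ℂ = ⟪x, projOf S y⟫_ℂ :=
  Submodule.inner_starProjection_left_eq_right S x y

lemma projOf_idem (S : Submodule ℂ E) (x : E) : projOf S (projOf S x) = projOf S x :=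
  projOf_eq_self S (projOf_apply_mem S x)

lemma inner_projOf_self (S : Submodule ℂ E) (x : E) :
    ⟪x, projOf S x⟫_ℂ = ((‖projOf S x‖ ^ 2 : ℝ) : ℂ) := by
  have h1 := projOf_symm S x (projOf S x)
  rw [projOf_idem] at h1
  rw [← h1, inner_self_eq_norm_sq_to_K]
  norm_cast

lemma quad_le_retrace (T : E →ₗ[ℂ] E) (hT : ∀ w : E, 0 ≤ (⟪w, T w⟫_ℂ).re) (z : E) :
    (⟪z, T z⟫_ℂ).re ≤ (LinearMap.trace ℂ E T).re * ‖z‖ ^ 2 := by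
  classical
  rcases eq_or_ne z 0 with rfl | hz
  · have : ∃ b : OrthonormalBasis (Fin (Module.finrank ℂ E)) ℂ E, True :=
      ⟨stdOrthonormalBasis ℂ E, trivial⟩
    obtain ⟨b, -⟩ := this
    have htr : 0 ≤ (LinearMap.trace ℂ E T).re := by
      rw [trace_onb b]
      rw [Complex.re_sum]
      exact Finset.sum_nonneg fun i _ => hT _
    simp only [inner_zero_left, Complex.zero_re]
    positivity
  · set u : E := (‖z‖ : ℂ)⁻¹ • z with hu
    have hzn : (0:ℝ) < ‖z‖ := norm_pos_iff.mpr hz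
    have hun : ‖u‖ = 1 := by
      rw [hu, norm_smul]
      simp [norm_inv, abs_of_pos hzn, inv_mul_cancel₀ (ne_of_gt hzn)]
    have horth : Orthonormal ℂ ((↑) : ({u} : Set E) → E) := by
      rw [orthonormal_subtype_iff_ite]
      intro v hv w hw
      simp only [Set.mem_singleton_iff] at hv hw
      subst hv; subst hw
      simp [inner_self_eq_norm_sq_to_K, hun]
    obtain ⟨F, b, hsub, hb⟩ := horth.exists_orthonormalBasis_extension
    have huF : u ∈ F := hsub rfl
    have key : (⟪u, T u⟫_ℂ).re ≤ (LinearMap.trace ℂ E T).re := by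
      rw [trace_onb b, Complex.re_sum]
      have : (⟪u, T u⟫_ℂ).re = (fun i : F => (⟪b i, T (b i)⟫_ℂ).re) ⟨u, huF⟩ := by
        simp [hb]
      rw [this]
      exact Finset.single_le_sum (fun i _ => hT _) (Finset.mem_univ _)
    have hscale : (⟪u, T u⟫_ℂ).re = (⟪z, T z⟫_ℂ).re / ‖z‖ ^ 2 := by
      rw [hu, map_smul, inner_smul_left, inner_smul_right]
      simp only [map_inv₀, Complex.conj_ofReal, ← mul_assoc, ← Complex.ofReal_inv, ← Complex.ofReal_mul]
      rw [Complex.re_ofReal_mul, pow_two]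
      field_simp
    rw [hscale] at key
    calc (⟪z, T z⟫_ℂ).re = (⟪z, T z⟫_ℂ).re / ‖z‖ ^ 2 * ‖z‖ ^ 2 := by field_simp
    _ ≤ (LinearMap.trace ℂ E T).re * ‖z‖ ^ 2 := by
      apply mul_le_mul_of_nonneg_right key (by positivity)


lemma trace_comp_comm' (f g : E →ₗ[ℂ] E) :
    LinearMap.trace ℂ E (f ∘ₗ g) = LinearMap.trace ℂ E (g ∘ₗ f) :=
  LinearMap.trace_mul_comm ℂ f g

lemma spec_quad_le (ρ : E →ₗ[ℂ] E) (hsym : ρ.IsSymmetric) {ε : ℝ} {s : E}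
    (hs : s ∈ specSub ρ (Set.Ico 0 ε)) :
    (⟪s, ρ s⟫_ℂ).re ≤ ε * ‖s‖ ^ 2 := by
  classical
  rw [specSub, Submodule.mem_iSup_iff_exists_finsupp] at hs
  obtain ⟨f, hf, hsum⟩ := hs
  have horth : ∀ c c' : (Set.Ico 0 ε : Set ℝ), c ≠ c' → ⟪f c, f c'⟫_ℂ = 0 := by
    intro c c' hcc
    have hne : ((c : ℝ) : ℂ) ≠ ((c' : ℝ) : ℂ) := by
      intro h
      exact hcc (Subtype.ext (by exact_mod_cast h))
    exact hsym.orthogonalFamily_eigenspaces hne ⟨f c, hf c⟩ ⟨f c', hf c'⟩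
  have hcollapse : ∀ g : (Set.Ico 0 ε : Set ℝ) → ℂ,
      ⟪s, ∑ c ∈ f.support, g c • f c⟫_ℂ = ∑ c ∈ f.support, g c * ⟪f c, f c⟫_ℂ := by
    intro g
    rw [← hsum, Finsupp.sum, sum_inner]
    refine Finset.sum_congr rfl fun c hc => ?_
    rw [inner_sum]
    rw [Finset.sum_eq_single c]
    · rw [inner_smul_right]
    · intro c' _ hne
      rw [inner_smul_right, horth c c' (Ne.symm hne), mul_zero]
    · intro hc'; exact absurd hc hc'
  have hrs : ρ s = ∑ c ∈ f.support, ((c : ℝ) : ℂ) • f c := by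
    conv_lhs => rw [← hsum]
    rw [Finsupp.sum, map_sum]
    exact Finset.sum_congr rfl fun c _ => Module.End.mem_eigenspace_iff.mp (hf c)
  have hss : s = ∑ c ∈ f.support, (1 : ℂ) • f c := by
    conv_lhs => rw [← hsum]
    rw [Finsupp.sum]
    exact Finset.sum_congr rfl fun c _ => (one_smul ℂ (f c)).symm
  have hinre : ∀ x : E, (⟪x, x⟫_ℂ).re = ‖x‖ ^ 2 := fun x => by
    rw [← RCLike.re_to_complex, inner_self_eq_norm_sq]
  have h1 : (⟪s, ρ s⟫_ℂ).re = ∑ c ∈ f.support, (c : ℝ) * ‖f c‖ ^ 2 := by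
    rw [hrs, hcollapse, Complex.re_sum]
    refine Finset.sum_congr rfl fun c _ => ?_
    rw [Complex.re_ofReal_mul, hinre]
  have h2 : ‖s‖ ^ 2 = ∑ c ∈ f.support, ‖f c‖ ^ 2 := by
    have h3 := hcollapse (fun _ => (1 : ℂ))
    rw [← hss] at h3
    have hre := congrArg Complex.re h3
    rw [hinre] at hre
    rw [hre, Complex.re_sum]
    exact Finset.sum_congr rfl fun c _ => by rw [one_mul, hinre]
  rw [h1, h2, Finset.mul_sum]
  refine Finset.sum_le_sum fun c _ => ?_
  exact mul_le_mul_of_nonneg_right (le_of_lt c.2.2) (sq_nonneg _)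

lemma retrace_proj_le {ε : ℝ} (hε : 0 ≤ ε) (σ : E →ₗ[ℂ] E)
    (hσ : ∀ w : E, (⟪w, σ w⟫_ℂ).re ≤ ε * ‖w‖ ^ 2)
    (PV : E →L[ℂ] E) (hidem : PV.comp PV = PV) (hsa : IsSelfAdjoint PV) (V : ℕ)
    (hrank : Module.finrank ℂ (LinearMap.range PV.toLinearMap) = V) :
    (LinearMap.trace ℂ E (PV.toLinearMap ∘ₗ σ ∘ₗ PV.toLinearMap)).re ≤ ε * V := by
  classical
  have hPVsymm : ∀ x y : E, ⟪PV x, y⟫_ℂ = ⟪x, PV y⟫_ℂ := fun x y =>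
    (ContinuousLinearMap.isSelfAdjoint_iff_isSymmetric.mp hsa) x y
  have hPVidem' : ∀ x, PV (PV x) = PV x := fun x => by
    have := ContinuousLinearMap.ext_iff.mp hidem x
    simpa using this
  set W := LinearMap.range PV.toLinearMap with hW
  have hfix : ∀ x ∈ W, PV x = x := by
    rintro x ⟨w, rfl⟩
    exact hPVidem' w
  have hker : ∀ x : E, (∀ w ∈ W, ⟪w, x⟫_ℂ = 0) → PV x = 0 := by
    intro x hx
    have hmem : PV x ∈ W := ⟨x, rfl⟩
    have h1 : ⟪PV (PV x), x⟫_ℂ = ⟪PV x, PV x⟫_ℂ := hPVsymm (PV x) x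
    rw [hPVidem', hx _ hmem] at h1
    exact inner_self_eq_zero.mp h1.symm
  set n := Module.finrank ℂ W with hn
  set bW := stdOrthonormalBasis ℂ W with hbWdef
  have hbW : Orthonormal ℂ (fun i : Fin n => ((bW i : E))) :=
    bW.orthonormal.comp_linearIsometry W.subtypeₗᵢ
  have hinj : Function.Injective (fun i : Fin n => ((bW i : E))) :=
    hbW.linearIndependent.injective
  set v : Set E := Set.range (fun i : Fin n => ((bW i : E))) with hv
  have hvON : Orthonormal ℂ ((↑) : v → E) := (orthonormal_subtype_range hinj).mpr hbW
  obtain ⟨F, b, hsub, hb⟩ := hvON.exists_orthonormalBasis_extension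
  have hspan : Submodule.span ℂ v = W := by
    have h1 : v = W.subtype '' Set.range (⇑bW) := by
      rw [hv, ← Set.range_comp]
      rfl
    rw [h1, ← Submodule.map_span]
    have h2 : Submodule.span ℂ (Set.range ⇑bW) = ⊤ := by
      rw [← OrthonormalBasis.coe_toBasis bW]; exact bW.toBasis.span_eq
    rw [h2, Submodule.map_top, Submodule.range_subtype]
  have hterm : ∀ x : F, (⟪b x, (PV.toLinearMap ∘ₗ σ ∘ₗ PV.toLinearMap) (b x)⟫_ℂ).re
      ≤ if (x : E) ∈ v then ε else 0 := by
    intro x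
    have hbx : b x = (x : E) := by rw [hb]
    by_cases hxv : (x : E) ∈ v
    · simp only [hxv, if_true]
      have hfix' : PV (x : E) = x := hfix _ (hspan ▸ Submodule.subset_span hxv)
      have heq : ⟪b x, (PV.toLinearMap ∘ₗ σ ∘ₗ PV.toLinearMap) (b x)⟫_ℂ
          = ⟪(x : E), σ (x : E)⟫_ℂ := by
        simp only [LinearMap.comp_apply, ContinuousLinearMap.coe_coe, hbx, hfix']
        rw [← hPVsymm, hfix']
      rw [heq]
      have hn1 : ‖(x : E)‖ = 1 := by rw [← hbx]; exact b.orthonormal.1 x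
      calc (⟪(x : E), σ (x : E)⟫_ℂ).re ≤ ε * ‖(x : E)‖ ^ 2 := hσ _
      _ = ε := by rw [hn1]; ring
    · simp only [hxv, if_false]
      have hzero : PV (x : E) = 0 := by
        apply hker
        intro w hw
        rw [← hspan] at hw
        induction hw using Submodule.span_induction with
        | mem w hwv =>
          have hwF : w ∈ F := hsub hwv
          have hne : (⟨w, hwF⟩ : F) ≠ x := by
            intro h
            exact hxv (by rw [← congrArg (Subtype.val) h]; exact hwv)
          have := (orthonormal_iff_ite.mp b.orthonormal) ⟨w, hwF⟩ x
          rw [hb] at this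
          simpa [hne] using this
        | zero => exact inner_zero_left _
        | add w₁ w₂ _ _ h1 h2 => rw [inner_add_left, h1, h2, add_zero]
        | smul c w _ h1 => rw [inner_smul_left, h1, mul_zero]
      have heq0 : ⟪b x, (PV.toLinearMap ∘ₗ σ ∘ₗ PV.toLinearMap) (b x)⟫_ℂ = 0 := by
        simp only [LinearMap.comp_apply, ContinuousLinearMap.coe_coe, hbx, hzero, map_zero,
          inner_zero_right]
      rw [heq0]
      simp
  rw [trace_onb b, Complex.re_sum]
  calc ∑ x : F, (⟪b x, (PV.toLinearMap ∘ₗ σ ∘ₗ PV.toLinearMap) (b x)⟫_ℂ).re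
      ≤ ∑ x : F, (if (x : E) ∈ v then ε else 0) := Finset.sum_le_sum fun x _ => hterm x
  _ = ε * V := by
    rw [Finset.sum_ite, Finset.sum_const, Finset.sum_const_zero, add_zero, nsmul_eq_mul]
    have hcardv : v.toFinset.card = V := by
      rw [Set.toFinset_range, Finset.card_image_of_injective _ hinj, Finset.card_univ,
        Fintype.card_fin]
      exact hrank
    have hcard : (Finset.univ.filter (fun x : F => (x : E) ∈ v)).card = v.toFinset.card := by
      apply Finset.card_bij (fun (x : F) _ => (x : E))
      · intro a ha
        rw [Set.mem_toFinset]
        exact (Finset.mem_filter.mp ha).2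
      · intro a _ a' _ h
        exact Subtype.ext h
      · intro e he
        have hev : e ∈ v := Set.mem_toFinset.mp he
        exact ⟨⟨e, hsub hev⟩, Finset.mem_filter.mpr ⟨Finset.mem_univ _, hev⟩, rfl⟩
    rw [hcard, hcardv, mul_comm]

end Generic

/-! ### Slices of the concrete tensor product -/

section Slice
variable {ι κ : Type*} [Fintype ι] [Fintype κ] [DecidableEq ι] [DecidableEq κ]

def slcL (c : κ) : EuclideanSpace ℂ (ι × κ) →ₗ[ℂ] EuclideanSpace ℂ ι where
  toFun z := WithLp.toLp 2 (fun i => z (i, c))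
  map_add' _ _ := rfl
  map_smul' _ _ := rfl

lemma slc_ext {z w : EuclideanSpace ℂ (ι × κ)} (h : ∀ c, slcL c z = slcL c w) : z = w := by
  ext p
  exact congrArg (fun v : EuclideanSpace ℂ ι => v p.1) (h p.2)

lemma inner_slc (z w : EuclideanSpace ℂ (ι × κ)) :
    ⟪z, w⟫_ℂ = ∑ c, ⟪slcL c z, slcL c w⟫_ℂ := by
  simp only [PiLp.inner_apply, RCLike.inner_apply, slcL, LinearMap.coe_mk, AddHom.coe_mk]
  rw [Fintype.sum_prod_type_right]
  rfl

lemma norm_sq_slc (z : EuclideanSpace ℂ (ι × κ)) :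
    ‖z‖ ^ 2 = ∑ c, ‖slcL c z‖ ^ 2 := by
  have h := congrArg Complex.re (inner_slc z z)
  rw [show (⟪z, z⟫_ℂ).re = ‖z‖ ^ 2 by rw [← RCLike.re_to_complex, inner_self_eq_norm_sq]] at h
  rw [h, Complex.re_sum]
  exact Finset.sum_congr rfl fun c _ => by
    rw [← RCLike.re_to_complex, inner_self_eq_norm_sq]

lemma mulVec_euclid (M : Matrix ι ι ℂ) (v : EuclideanSpace ℂ ι) (j : ι) :
    Matrix.toEuclideanLin M v j = ∑ i, M j i * v i := rfl

lemma symm_id : (Matrix.toEuclideanLin.symm (LinearMap.id : EuclideanSpace ℂ κ →ₗ[ℂ] _)) = 1 := by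
  rw [LinearEquiv.symm_apply_eq]
  apply LinearMap.ext; intro v; ext j
  show v j = ∑ i, (1 : Matrix κ κ ℂ) j i * v i
  simp [Matrix.one_apply]

lemma kron_id_apply (X : EuclideanSpace ℂ ι →ₗ[ℂ] EuclideanSpace ℂ ι)
    (z : EuclideanSpace ℂ (ι × κ)) (p : ι × κ) :
    kron X LinearMap.id z p = X (slcL p.2 z) p.1 := by
  obtain ⟨M, rfl⟩ : ∃ M, Matrix.toEuclideanLin M = X :=
    ⟨_, Matrix.toEuclideanLin.apply_symm_apply X⟩
  unfold kron
  rw [LinearEquiv.symm_apply_apply, symm_id]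
  show ∑ q : ι × κ, (Matrix.kroneckerMap (· * ·) M 1) p q * z q
    = ∑ i, M p.1 i * (slcL p.2 z) i
  rw [Fintype.sum_prod_type]
  simp [Matrix.one_apply, mul_ite, mul_assoc, slcL]
  rfl

lemma kron_id_slc (X : EuclideanSpace ℂ ι →ₗ[ℂ] EuclideanSpace ℂ ι)
    (z : EuclideanSpace ℂ (ι × κ)) (c : κ) :
    slcL c (kron X LinearMap.id z) = X (slcL c z) :=
  by ext i; exact kron_id_apply X z (i, c)

lemma mem_extSub_slc (Y : Submodule ℂ (EuclideanSpace ℂ ι)) {z : EuclideanSpace ℂ (ι × κ)}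
    (hz : z ∈ extSub (κ := κ) Y) (c : κ) : slcL c z ∈ Y := by
  induction hz using Submodule.span_induction with
  | mem x hx =>
    obtain ⟨v, hv, b, rfl⟩ := hx
    have : slcL c (tmul v b) = b c • v := by
      ext i
      show v i * b c = b c * v i
      ring
    rw [this]
    exact Y.smul_mem _ hv
  | zero => rw [map_zero]; exact Y.zero_mem
  | add x y _ _ h1 h2 => rw [map_add]; exact Y.add_mem h1 h2
  | smul a x _ h1 => rw [map_smul]; exact Y.smul_mem a h1

lemma slc_tmul (a : EuclideanSpace ℂ ι) (b : EuclideanSpace ℂ κ) (c : κ) :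
    slcL c (tmul a b) = b c • a := by
  ext i
  show a i * b c = b c * a i
  ring

lemma inner_tmul_single (a : EuclideanSpace ℂ ι) (b : κ) (w : EuclideanSpace ℂ (ι × κ)) :
    ⟪tmul a (EuclideanSpace.single b 1), w⟫_ℂ = ⟪a, slcL b w⟫_ℂ := by
  rw [inner_slc]
  rw [Finset.sum_eq_single b]
  · rw [slc_tmul]
    simp [EuclideanSpace.single_apply]
  · intro c _ hc
    rw [slc_tmul]
    have : (EuclideanSpace.single b 1 : EuclideanSpace ℂ κ) c = 0 := by
      simp [EuclideanSpace.single_apply, hc]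
    rw [this, zero_smul, inner_zero_left]
  · intro h; exact absurd (Finset.mem_univ b) h

end Slice

/-! ### The reduced operator -/

section Rho
variable {ι κ : Type*} [Fintype ι] [Fintype κ] [DecidableEq ι] [DecidableEq κ]

def rkOne (a : EuclideanSpace ℂ ι) : EuclideanSpace ℂ ι →ₗ[ℂ] EuclideanSpace ℂ ι where
  toFun z := ⟪a, z⟫_ℂ • a
  map_add' x y := by rw [inner_add_right, add_smul]
  map_smul' c x := by rw [inner_smul_right, RingHom.id_apply, smul_smul]

lemma rkOne_apply (a z : EuclideanSpace ℂ ι) : rkOne a z = ⟪a, z⟫_ℂ • a := rfl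

lemma tmul_smul_left (c : ℂ) (a : EuclideanSpace ℂ ι) (b : EuclideanSpace ℂ κ) :
    tmul (c • a) b = c • tmul a b := by
  ext p
  show (c * a p.1) * b p.2 = c * (a p.1 * b p.2)
  ring

lemma kron_id_tmul (X : EuclideanSpace ℂ ι →ₗ[ℂ] EuclideanSpace ℂ ι)
    (u : EuclideanSpace ℂ ι) (v : EuclideanSpace ℂ κ) :
    kron X LinearMap.id (tmul u v) = tmul (X u) v := by
  apply slc_ext
  intro c
  rw [kron_id_slc, slc_tmul, slc_tmul, map_smul]

lemma single_pair (k : ι) (b : κ) :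
    (EuclideanSpace.single ((k, b) : ι × κ) 1 : EuclideanSpace ℂ (ι × κ))
      = tmul (EuclideanSpace.single k 1) (EuclideanSpace.single b 1) := by
  ext p
  show (EuclideanSpace.single ((k, b) : ι × κ) 1 : EuclideanSpace ℂ (ι × κ)) p
    = (EuclideanSpace.single k 1 : EuclideanSpace ℂ ι) p.1
      * (EuclideanSpace.single b 1 : EuclideanSpace ℂ κ) p.2
  simp only [EuclideanSpace.single_apply]
  by_cases h1 : p.1 = k <;> by_cases h2 : p.2 = b <;>
    simp [h1, h2, Prod.ext_iff]

lemma rho_quad (Y : Submodule ℂ (EuclideanSpace ℂ (ι × κ)))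
    (ρA : EuclideanSpace ℂ ι →ₗ[ℂ] EuclideanSpace ℂ ι)
    (hρ : ∀ X : EuclideanSpace ℂ ι →ₗ[ℂ] EuclideanSpace ℂ ι,
      LinearMap.trace ℂ _ (ρA ∘ₗ X) =
        LinearMap.trace ℂ _ ((projOf Y).toLinearMap ∘ₗ kron X LinearMap.id))
    (a : EuclideanSpace ℂ ι) :
    ⟪a, ρA a⟫_ℂ =
      ((∑ b : κ, ‖projOf Y (tmul a (EuclideanSpace.single b 1))‖ ^ 2 : ℝ) : ℂ) := by
  have hL : LinearMap.trace ℂ _ (ρA ∘ₗ rkOne a) = ⟪a, ρA a⟫_ℂ := by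
    rw [trace_onb (EuclideanSpace.basisFun ι ℂ)]
    have hterm : ∀ k : ι,
        ⟪(EuclideanSpace.basisFun ι ℂ) k, (ρA ∘ₗ rkOne a) ((EuclideanSpace.basisFun ι ℂ) k)⟫_ℂ
        = ⟪a, (EuclideanSpace.basisFun ι ℂ) k⟫_ℂ * ⟪(EuclideanSpace.basisFun ι ℂ) k, ρA a⟫_ℂ := by
      intro k
      rw [LinearMap.comp_apply, rkOne_apply, map_smul, inner_smul_right]
    simp_rw [hterm]
    exact (EuclideanSpace.basisFun ι ℂ).sum_inner_mul_inner a (ρA a)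
  have hR : LinearMap.trace ℂ _ ((projOf Y).toLinearMap ∘ₗ kron (rkOne a) LinearMap.id)
      = ((∑ b : κ, ‖projOf Y (tmul a (EuclideanSpace.single b 1))‖ ^ 2 : ℝ) : ℂ) := by
    rw [trace_onb (EuclideanSpace.basisFun (ι × κ) ℂ)]
    have hterm : ∀ p : ι × κ,
        ⟪(EuclideanSpace.basisFun (ι × κ) ℂ) p,
          ((projOf Y).toLinearMap ∘ₗ kron (rkOne a) LinearMap.id)
            ((EuclideanSpace.basisFun (ι × κ) ℂ) p)⟫_ℂ
        = ⟪a, EuclideanSpace.single p.1 1⟫_ℂ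
            * ⟪EuclideanSpace.single p.1 1,
                slcL p.2 (projOf Y (tmul a (EuclideanSpace.single p.2 1)))⟫_ℂ := by
      rintro ⟨k, b⟩
      rw [LinearMap.comp_apply, EuclideanSpace.basisFun_apply, single_pair, kron_id_tmul,
        rkOne_apply, tmul_smul_left, map_smul, inner_smul_right]
      congr 1
      show ⟪tmul (EuclideanSpace.single k 1) (EuclideanSpace.single b 1),
        projOf Y (tmul a (EuclideanSpace.single b 1))⟫_ℂ = _
      rw [inner_tmul_single]
    simp_rw [hterm]
    rw [Fintype.sum_prod_type_right]
    have hsum : ∀ b : κ,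
        (∑ k : ι, ⟪a, EuclideanSpace.single k 1⟫_ℂ
          * ⟪EuclideanSpace.single k 1,
              slcL b (projOf Y (tmul a (EuclideanSpace.single b 1)))⟫_ℂ)
        = ((‖projOf Y (tmul a (EuclideanSpace.single b 1))‖ ^ 2 : ℝ) : ℂ) := by
      intro b
      have h1 : (∑ k : ι, ⟪a, EuclideanSpace.single k 1⟫_ℂ
          * ⟪EuclideanSpace.single k 1,
              slcL b (projOf Y (tmul a (EuclideanSpace.single b 1)))⟫_ℂ)
          = ⟪a, slcL b (projOf Y (tmul a (EuclideanSpace.single b 1)))⟫_ℂ := by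
        have := (EuclideanSpace.basisFun ι ℂ).sum_inner_mul_inner a
          (slcL b (projOf Y (tmul a (EuclideanSpace.single b 1))))
        simp_rw [EuclideanSpace.basisFun_apply] at this
        exact this
      rw [h1, ← inner_tmul_single, inner_projOf_self]
    simp_rw [hsum]
    rw [← Complex.ofReal_sum]
  rw [← hL, hρ, hR]

lemma rho_symm (Y : Submodule ℂ (EuclideanSpace ℂ (ι × κ)))
    (ρA : EuclideanSpace ℂ ι →ₗ[ℂ] EuclideanSpace ℂ ι)
    (hρ : ∀ X : EuclideanSpace ℂ ι →ₗ[ℂ] EuclideanSpace ℂ ι,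
      LinearMap.trace ℂ _ (ρA ∘ₗ X) =
        LinearMap.trace ℂ _ ((projOf Y).toLinearMap ∘ₗ kron X LinearMap.id)) :
    ρA.IsSymmetric := by
  rw [LinearMap.isSymmetric_iff_inner_map_self_real]
  intro v
  have h := rho_quad Y ρA hρ v
  have h2 : ⟪ρA v, v⟫_ℂ
      = ((∑ b : κ, ‖projOf Y (tmul v (EuclideanSpace.single b 1))‖ ^ 2 : ℝ) : ℂ) := by
    calc ⟪ρA v, v⟫_ℂ = conj ⟪v, ρA v⟫_ℂ := (inner_conj_symm _ _).symm
    _ = _ := by rw [h, Complex.conj_ofReal]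
  rw [h2, Complex.conj_ofReal]

end Rho

/-- Trimming error estimate: if `ρ_A = tr_B(P_Y)`, `P₋` is the spectral projection of `ρ_A`
onto `[0, ε)` and `P_V` is any rank-`V` orthogonal projection on `H_A`, then for any unit
vector `y ∈ Y ⊗ H_C` one has `‖(P_V P₋ ⊗ id_B ⊗ id_C) y‖² ≤ ε·V`. -/
theorem trimming_error_bound
    {ιA ιB ιC : Type*} [Fintype ιA] [Fintype ιB] [Fintype ιC]
    [DecidableEq ιA] [DecidableEq ιB] [DecidableEq ιC]
    (Y : Submodule ℂ (EuclideanSpace ℂ (ιA × ιB)))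
    (ρA : EuclideanSpace ℂ ιA →ₗ[ℂ] EuclideanSpace ℂ ιA)
    (hρ : ∀ X : EuclideanSpace ℂ ιA →ₗ[ℂ] EuclideanSpace ℂ ιA,
      LinearMap.trace ℂ _ (ρA ∘ₗ X) =
        LinearMap.trace ℂ _ ((projOf Y).toLinearMap ∘ₗ kron X LinearMap.id))
    (ε : ℝ) (hε : 0 < ε)
    (PV : EuclideanSpace ℂ ιA →L[ℂ] EuclideanSpace ℂ ιA)
    (hPVidem : PV.comp PV = PV) (hPVsa : IsSelfAdjoint PV)
    (V : ℕ) (hrank : Module.finrank ℂ (LinearMap.range PV.toLinearMap) = V)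
    (y : EuclideanSpace ℂ ((ιA × ιB) × ιC))
    (hy : y ∈ extSub (κ := ιC) Y) (hy1 : ‖y‖ = 1) :
    ‖(kron (kron ((PV.comp (projOf (specSub ρA (Set.Ico 0 ε)))).toLinearMap) LinearMap.id)
        LinearMap.id) y‖ ^ 2 ≤ ε * V := by
  classical
  set S : Submodule ℂ (EuclideanSpace ℂ ιA) := specSub ρA (Set.Ico 0 ε) with hSdef
  set Q : EuclideanSpace ℂ ιA →L[ℂ] EuclideanSpace ℂ ιA := projOf S with hQdef
  set M : EuclideanSpace ℂ ιA →ₗ[ℂ] EuclideanSpace ℂ ιA := (PV.comp Q).toLinearMap with hMdef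
  set N : EuclideanSpace ℂ ιA →ₗ[ℂ] EuclideanSpace ℂ ιA :=
    Q.toLinearMap ∘ₗ PV.toLinearMap ∘ₗ Q.toLinearMap with hNdef
  have hPVsymm : ∀ x y', ⟪PV x, y'⟫_ℂ = ⟪x, PV y'⟫_ℂ := fun x y' =>
    (ContinuousLinearMap.isSelfAdjoint_iff_isSymmetric.mp hPVsa) x y'
  have hPVidem' : ∀ x, PV (PV x) = PV x := fun x => by
    have := ContinuousLinearMap.ext_iff.mp hPVidem x
    simpa using this
  have hQsymm : ∀ x y', ⟪Q x, y'⟫_ℂ = ⟪x, Q y'⟫_ℂ := fun x y' => projOf_symm S x y'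
  have hQmem : ∀ x, Q x ∈ S := fun x => projOf_apply_mem S x
  have hQnorm : ∀ x, ‖Q x‖ ≤ ‖x‖ := by
    intro x
    have h1 : ‖(S.orthogonalProjection) x‖ ≤ ‖(S.orthogonalProjection)‖ * ‖x‖ :=
      (S.orthogonalProjection).le_opNorm x
    have h2 := Submodule.orthogonalProjectionOnto_norm_le S
    calc ‖Q x‖ = ‖(S.orthogonalProjection) x‖ := rfl
    _ ≤ ‖(S.orthogonalProjection)‖ * ‖x‖ := h1
    _ ≤ 1 * ‖x‖ := mul_le_mul_of_nonneg_right h2 (norm_nonneg x)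
    _ = ‖x‖ := one_mul _
  have step1 : ∀ u : EuclideanSpace ℂ ιA, ⟪M u, M u⟫_ℂ = ⟪u, N u⟫_ℂ := by
    intro u
    show ⟪PV (Q u), PV (Q u)⟫_ℂ = ⟪u, Q (PV (Q u))⟫_ℂ
    rw [← hQsymm, hPVsymm (Q u) (PV (Q u)), hPVidem']
  have step1' : ∀ u : EuclideanSpace ℂ (ιA × ιB),
      ‖kron M LinearMap.id u‖ ^ 2 = (⟪u, kron N LinearMap.id u⟫_ℂ).re := by
    intro u
    have h1 : ⟪kron M LinearMap.id u, kron M LinearMap.id u⟫_ℂ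
        = ⟪u, kron N LinearMap.id u⟫_ℂ := by
      rw [inner_slc, inner_slc]
      refine Finset.sum_congr rfl fun c _ => ?_
      rw [kron_id_slc, kron_id_slc]
      exact step1 (slcL c u)
    have h2 : (⟪kron M LinearMap.id u, kron M LinearMap.id u⟫_ℂ).re
        = ‖kron M LinearMap.id u‖ ^ 2 := by
      rw [← RCLike.re_to_complex, inner_self_eq_norm_sq]
    rw [← h2, h1]
  have hsym : ρA.IsSymmetric := rho_symm Y ρA hρ
  have key : ∀ f g : Module.End ℂ (EuclideanSpace ℂ ιA),
      LinearMap.trace ℂ _ (f * g) = LinearMap.trace ℂ _ (g * f) := fun f g =>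
    LinearMap.trace_mul_comm ℂ f g
  have hpp : PV.toLinearMap ∘ₗ PV.toLinearMap = PV.toLinearMap :=
    LinearMap.ext fun x => hPVidem' x
  have hσbound : ∀ w, (⟪w, (Q.toLinearMap ∘ₗ ρA ∘ₗ Q.toLinearMap) w⟫_ℂ).re ≤ ε * ‖w‖ ^ 2 := by
    intro w
    have h1 : ⟪w, (Q.toLinearMap ∘ₗ ρA ∘ₗ Q.toLinearMap) w⟫_ℂ = ⟪Q w, ρA (Q w)⟫_ℂ := by
      show ⟪w, Q (ρA (Q w))⟫_ℂ = _
      rw [← hQsymm]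
    rw [h1]
    calc (⟪Q w, ρA (Q w)⟫_ℂ).re ≤ ε * ‖Q w‖ ^ 2 := spec_quad_le ρA hsym (hQmem w)
    _ ≤ ε * ‖w‖ ^ 2 := by
      have h2 : ‖Q w‖ ^ 2 ≤ ‖w‖ ^ 2 := by
        apply pow_le_pow_left₀ (norm_nonneg _) (hQnorm w)
      exact mul_le_mul_of_nonneg_left h2 (le_of_lt hε)
  have hfinal := retrace_proj_le (le_of_lt hε) (Q.toLinearMap ∘ₗ ρA ∘ₗ Q.toLinearMap)
    hσbound PV hPVidem hPVsa V hrank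
  have step2 : ∀ z ∈ Y, (⟪z, kron N LinearMap.id z⟫_ℂ).re ≤ ε * V * ‖z‖ ^ 2 := by
    intro z hz
    set T : EuclideanSpace ℂ (ιA × ιB) →ₗ[ℂ] EuclideanSpace ℂ (ιA × ιB) :=
      (projOf Y).toLinearMap ∘ₗ kron N LinearMap.id ∘ₗ (projOf Y).toLinearMap with hTdef
    have hTz : ⟪z, kron N LinearMap.id z⟫_ℂ = ⟪z, T z⟫_ℂ := by
      have h0 : T z = projOf Y (kron N LinearMap.id (projOf Y z)) := rfl
      rw [h0, projOf_eq_self Y hz, ← projOf_symm Y, projOf_eq_self Y hz]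
    have hTpsd : ∀ w, 0 ≤ (⟪w, T w⟫_ℂ).re := by
      intro w
      have h1 : ⟪w, T w⟫_ℂ = ⟪projOf Y w, kron N LinearMap.id (projOf Y w)⟫_ℂ := by
        have h0 : T w = projOf Y (kron N LinearMap.id (projOf Y w)) := rfl
        rw [h0, ← projOf_symm Y]
      rw [h1, ← step1']
      positivity
    have htr := quad_le_retrace T hTpsd z
    have hPPY : (projOf Y).toLinearMap ∘ₗ (projOf Y).toLinearMap = (projOf Y).toLinearMap :=
      LinearMap.ext fun x => projOf_idem Y x
    have htrT : LinearMap.trace ℂ _ T = LinearMap.trace ℂ _ (ρA ∘ₗ N) := by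
      calc LinearMap.trace ℂ _ T
          = LinearMap.trace ℂ _ ((projOf Y).toLinearMap ∘ₗ
              (((projOf Y).toLinearMap ∘ₗ kron N LinearMap.id))) :=
            trace_comp_comm' (((projOf Y).toLinearMap ∘ₗ kron N LinearMap.id))
              ((projOf Y).toLinearMap)
      _ = LinearMap.trace ℂ _ (((projOf Y).toLinearMap ∘ₗ (projOf Y).toLinearMap) ∘ₗ
              kron N LinearMap.id) := rfl
      _ = LinearMap.trace ℂ _ ((projOf Y).toLinearMap ∘ₗ kron N LinearMap.id) := by rw [hPPY]
      _ = _ := (hρ N).symm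
    have hcyc : LinearMap.trace ℂ _ (ρA ∘ₗ N) =
        LinearMap.trace ℂ _ (PV.toLinearMap ∘ₗ (Q.toLinearMap ∘ₗ ρA ∘ₗ Q.toLinearMap)
          ∘ₗ PV.toLinearMap) := by
      calc LinearMap.trace ℂ _ (ρA ∘ₗ N)
          = LinearMap.trace ℂ _ (Q.toLinearMap ∘ₗ (ρA ∘ₗ Q.toLinearMap ∘ₗ PV.toLinearMap)) :=
            trace_comp_comm' (ρA ∘ₗ Q.toLinearMap ∘ₗ PV.toLinearMap) Q.toLinearMap
      _ = LinearMap.trace ℂ _ ((Q.toLinearMap ∘ₗ ρA ∘ₗ Q.toLinearMap) ∘ₗ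
            (PV.toLinearMap ∘ₗ PV.toLinearMap)) := by rw [hpp]; exact rfl
      _ = LinearMap.trace ℂ _ (PV.toLinearMap ∘ₗ
            ((Q.toLinearMap ∘ₗ ρA ∘ₗ Q.toLinearMap) ∘ₗ PV.toLinearMap)) :=
            trace_comp_comm' ((Q.toLinearMap ∘ₗ ρA ∘ₗ Q.toLinearMap) ∘ₗ PV.toLinearMap)
              PV.toLinearMap
      _ = _ := rfl
    calc (⟪z, kron N LinearMap.id z⟫_ℂ).re = (⟪z, T z⟫_ℂ).re := by rw [hTz]
    _ ≤ (LinearMap.trace ℂ _ T).re * ‖z‖ ^ 2 := htr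
    _ ≤ ε * V * ‖z‖ ^ 2 := by
      refine mul_le_mul_of_nonneg_right ?_ (sq_nonneg _)
      rw [htrT, hcyc]
      exact hfinal
  calc ‖kron (kron M LinearMap.id) LinearMap.id y‖ ^ 2
      = ∑ c : ιC, ‖kron M LinearMap.id (slcL c y)‖ ^ 2 := by
        rw [norm_sq_slc]
        exact Finset.sum_congr rfl fun c _ => by rw [kron_id_slc]
  _ ≤ ∑ c : ιC, ε * V * ‖slcL c y‖ ^ 2 := by
      refine Finset.sum_le_sum fun c _ => ?_
      rw [step1']
      exact step2 _ (mem_extSub_slc Y hy c)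
  _ = ε * V * ∑ c : ιC, ‖slcL c y‖ ^ 2 := by rw [Finset.mul_sum]
  _ = ε * V := by rw [← norm_sq_slc, hy1]; ring
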